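/- For all nonnegative integers n and k, the Bernoulli–Stirling number of the first kind A_{n,k} is an integer, i.e. the rational number A_{n,k} lies in ℤ. -/

import Mathlib

/-- Unsigned Stirling numbers of the first kind (cycle Stirling numbers). -/
def stirling1 : ℕ → ℕ → ℕ
  | 0, 0 => 1
  | 0, _ + 1 => 0
  | _ + 1, 0 => 0
  | n + 1, k + 1 => n * stirling1 n (k + 1) + stirling1 n k

/-- Generalized binomial coefficient with integer top: `C(a,b) = a(a-1)⋯(a-b+1)/b!`. -/
def intChoose (a : ℤ) (b : ℕ) : ℚ :=
  (∏ i ∈ Finset.range b, ((a : ℚ) - i)) / b.factorial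

/-- Bernoulli–Stirling numbers of the first kind. -/
def bsA (n k : ℕ) : ℚ :=
  ∑ h ∈ Finset.range (n + 1),
    bernoulli h * intChoose ((k : ℤ) + h - 1) h * stirling1 n (h + k) * (n : ℚ) ^ h

open Finset Polynomial


section Altsum
variable {A : Type*} [CommRing A]

/-- Signed iterated finite difference: `(-1)^i (Δ^i F)(0)`. -/
def altsum (i : ℕ) (F : ℕ → A) : A :=
  ∑ r ∈ range (i+1), (-1)^r * (i.choose r : A) * F r

lemma altsum_succ (i : ℕ) (F : ℕ → A) :
    altsum (i+1) F = altsum i F - altsum i (fun r => F (r+1)) := by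
  unfold altsum
  rw [Finset.sum_range_succ' (fun r => (-1:A)^r * ((i+1).choose r : A) * F r)]
  have h1 : ∀ r, (-1:A)^(r+1) * ((i+1).choose (r+1) : A) * F (r+1)
      = -((-1)^r * (i.choose r : A) * F (r+1)) - (-1)^r * (i.choose (r+1) : A) * F (r+1) := by
    intro r
    rw [Nat.choose_succ_succ']
    push_cast
    ring
  rw [Finset.sum_congr rfl (fun r _ => h1 r)]
  rw [Finset.sum_sub_distrib]
  have h2 : ∑ r ∈ range (i+1), -((-1:A)^r * (i.choose r : A) * F (r+1))
      = - ∑ r ∈ range (i+1), (-1:A)^r * (i.choose r : A) * F (r+1) := by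
    rw [Finset.sum_neg_distrib]
  have h3 : ∑ r ∈ range (i+1), (-1:A)^r * (i.choose r : A) * F r
      = (∑ r ∈ range i, (-1:A)^(r+1) * (i.choose (r+1) : A) * F (r+1)) + F 0 := by
    rw [Finset.sum_range_succ' (fun r => (-1:A)^r * (i.choose r : A) * F r)]
    simp
  have h4 : ∑ r ∈ range (i+1), (-1:A)^r * (i.choose (r+1) : A) * F (r+1)
      = ∑ r ∈ range i, (-1:A)^r * (i.choose (r+1) : A) * F (r+1) := by
    rw [Finset.sum_range_succ]
    simp
  rw [h2, h3, h4]
  have h5 : ∀ r, (-1:A)^(r+1) * (i.choose (r+1) : A) * F (r+1)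
      = -((-1:A)^r * (i.choose (r+1) : A) * F (r+1)) := by intro r; ring
  rw [Finset.sum_congr rfl (fun r _ => h5 r), Finset.sum_neg_distrib]
  simp only [Nat.choose_zero_right, Nat.cast_one]
  ring

lemma altsum_congr (i : ℕ) {F G : ℕ → A} (h : ∀ r, F r = G r) : altsum i F = altsum i G := by
  unfold altsum; exact Finset.sum_congr rfl (fun r _ => by rw [h r])

lemma altsum_sum {β : Type*} (i : ℕ) (s : Finset β) (H : β → ℕ → A) :
    altsum i (fun r => ∑ j ∈ s, H j r) = ∑ j ∈ s, altsum i (H j) := by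
  unfold altsum
  rw [Finset.sum_comm]
  exact Finset.sum_congr rfl (fun r _ => by rw [Finset.mul_sum])

lemma altsum_const_mul (i : ℕ) (c : A) (F : ℕ → A) :
    altsum i (fun r => c * F r) = c * altsum i F := by
  unfold altsum
  rw [Finset.mul_sum]
  exact Finset.sum_congr rfl (fun r _ => by ring)

lemma altsum_add (i : ℕ) (F G : ℕ → A) :
    altsum i (fun r => F r + G r) = altsum i F + altsum i G := by
  unfold altsum
  rw [← Finset.sum_add_distrib]
  exact Finset.sum_congr rfl (fun r _ => by ring)

end Altsum

section Del

/-- `del i d = (-1)^i Δ^i (x^d) (0)`. -/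
def del (i d : ℕ) : ℚ := altsum i (fun r => (r : ℚ)^d)

lemma del_succ (i d : ℕ) : del (i+1) d = - ∑ j ∈ range d, (d.choose j : ℚ) * del i j := by
  have h : del (i+1) d = del i d - altsum i (fun r => ((r:ℚ)+1)^d) := by
    unfold del
    rw [altsum_succ]
    congr 1
    exact altsum_congr i (fun r => by push_cast; ring)
  have h2 : altsum i (fun r => ((r:ℚ)+1)^d)
      = ∑ j ∈ range (d+1), (d.choose j : ℚ) * del i j := by
    have : ∀ r : ℕ, ((r:ℚ)+1)^d = ∑ j ∈ range (d+1), (d.choose j : ℚ) * (r:ℚ)^j := by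
      intro r
      rw [add_pow]
      exact Finset.sum_congr rfl (fun j _ => by ring)
    rw [altsum_congr i this, altsum_sum]
    exact Finset.sum_congr rfl (fun j _ => (altsum_const_mul i _ _))
  rw [h, h2, Finset.sum_range_succ, Nat.choose_self]
  push_cast
  ring

lemma del_eq_zero {i d : ℕ} (h : d < i) : del i d = 0 := by
  induction i generalizing d with
  | zero => omega
  | succ i ih =>
    rw [del_succ]
    have : ∀ j ∈ range d, (d.choose j : ℚ) * del i j = 0 := by
      intro j hj
      rw [ih (by simp at hj; omega)]
      ring
    rw [Finset.sum_congr rfl this]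
    simp

lemma newton : ∀ d N : ℕ, (N:ℚ)^d = ∑ i ∈ range (d+1), (-1)^i * del i d * (N.choose i : ℚ) := by
  intro d
  induction d using Nat.strong_induction_on with
  | _ d ihd =>
  -- extended-range version for smaller exponents
  have newton' : ∀ j D N : ℕ, j < d → j < D →
      (N:ℚ)^j = ∑ i ∈ range D, (-1)^i * del i j * (N.choose i : ℚ) := by
    intro j D N hj hD
    rw [ihd j hj N]
    rw [← Finset.sum_range_add_sum_Ico _ (by omega : j+1 ≤ D)]
    have : ∀ i ∈ Finset.Ico (j+1) D, (-1:ℚ)^i * del i j * (N.choose i : ℚ) = 0 := by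
      intro i hi
      simp only [Finset.mem_Ico] at hi
      rw [del_eq_zero (by omega)]
      ring
    rw [Finset.sum_congr rfl this]
    simp
  intro N
  induction N with
  | zero =>
    rw [Finset.sum_eq_single 0]
    · simp [del, altsum]
    · intro i _ hi
      simp [Nat.choose_eq_zero_of_lt (Nat.pos_of_ne_zero hi)]
    · intro h; simp at h
  | succ N ihN =>
    have key : ((N:ℚ)+1)^d - (N:ℚ)^d
        = ∑ i ∈ range (d+1), (-1)^i * del i d * (((N+1).choose i : ℚ) - (N.choose i : ℚ)) := by
      -- RHS: peel i = 0, use Pascal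
      rw [Finset.sum_range_succ' (fun i => (-1:ℚ)^i * del i d * (((N+1).choose i : ℚ) - (N.choose i : ℚ)))]
      have h0 : (-1:ℚ)^0 * del 0 d * (((N+1).choose 0 : ℚ) - (N.choose 0 : ℚ)) = 0 := by simp
      rw [h0, add_zero]
      have h1 : ∀ i, (-1:ℚ)^(i+1) * del (i+1) d * (((N+1).choose (i+1) : ℚ) - (N.choose (i+1) : ℚ))
          = (-1)^(i+1) * del (i+1) d * (N.choose i : ℚ) := by
        intro i
        rw [Nat.choose_succ_succ' N i]
        push_cast
        ring
      rw [Finset.sum_congr rfl (fun i _ => h1 i)]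
      have h2 : ∀ i, (-1:ℚ)^(i+1) * del (i+1) d * (N.choose i : ℚ)
          = (∑ j ∈ range d, (d.choose j : ℚ) * del i j) * ((-1)^i * (N.choose i : ℚ)) := by
        intro i
        rw [del_succ]
        ring
      rw [Finset.sum_congr rfl (fun i _ => h2 i)]
      have h3 : ∑ i ∈ range d, (∑ j ∈ range d, (d.choose j : ℚ) * del i j) * ((-1:ℚ)^i * (N.choose i : ℚ))
          = ∑ j ∈ range d, (d.choose j : ℚ) * ∑ i ∈ range d, (-1:ℚ)^i * del i j * (N.choose i : ℚ) := by
        have e1 : ∀ i ∈ range d, (∑ j ∈ range d, (d.choose j : ℚ) * del i j) * ((-1:ℚ)^i * (N.choose i : ℚ))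
            = ∑ j ∈ range d, (d.choose j : ℚ) * ((-1:ℚ)^i * del i j * (N.choose i : ℚ)) := by
          intro i _
          rw [Finset.sum_mul]
          exact Finset.sum_congr rfl (fun j _ => by ring)
        rw [Finset.sum_congr rfl e1, Finset.sum_comm]
        exact Finset.sum_congr rfl (fun j _ => by rw [Finset.mul_sum])
      rw [h3]
      have h4 : ∀ j ∈ range d, (d.choose j : ℚ) * ∑ i ∈ range d, (-1:ℚ)^i * del i j * (N.choose i : ℚ)
          = (d.choose j : ℚ) * (N:ℚ)^j := by
        intro j hj
        simp only [Finset.mem_range] at hj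
        rw [← newton' j d N hj hj]
      rw [Finset.sum_congr rfl h4]
      -- now: (N+1)^d - N^d = Σ_{j<d} C(d,j) N^j
      have h5 : ((N:ℚ)+1)^d = ∑ j ∈ range (d+1), (d.choose j : ℚ) * (N:ℚ)^j := by
        rw [add_pow]
        exact Finset.sum_congr rfl (fun j _ => by ring)
      rw [h5, Finset.sum_range_succ]
      simp
    have hc : ((N+1 : ℕ) : ℚ) = (N:ℚ)+1 := by push_cast; ring
    rw [hc]
    have expand : ∑ i ∈ range (d+1), (-1:ℚ)^i * del i d * (((N+1)).choose i : ℚ)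
        = ∑ i ∈ range (d+1), (-1:ℚ)^i * del i d * (N.choose i : ℚ)
          + ∑ i ∈ range (d+1), (-1:ℚ)^i * del i d * (((N+1).choose i : ℚ) - (N.choose i : ℚ)) := by
      rw [← Finset.sum_add_distrib]
      exact Finset.sum_congr rfl (fun i _ => by ring)
    rw [expand, ← ihN, ← key]
    ring

lemma sum_newton (d N : ℕ) :
    ∑ u ∈ range N, (u:ℚ)^d = ∑ i ∈ range (d+1), (-1)^i * del i d * (N.choose (i+1) : ℚ) := by
  induction N with
  | zero => simp
  | succ N ihN =>
    rw [Finset.sum_range_succ, ihN]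
    have : ∀ i, (-1:ℚ)^i * del i d * ((N+1).choose (i+1) : ℚ)
        = (-1)^i * del i d * (N.choose (i+1) : ℚ) + (-1)^i * del i d * (N.choose i : ℚ) := by
      intro i
      rw [Nat.choose_succ_succ N i]
      push_cast
      ring
    rw [Finset.sum_congr rfl (fun i _ => this i), Finset.sum_add_distrib, newton d N]

end Del


lemma prod_cast_choose (a b : ℕ) :
    ∏ i ∈ range b, ((a:ℚ) - i) = (b.factorial : ℚ) * (a.choose b : ℚ) := by
  induction b with
  | zero => simp
  | succ b ih =>
    rw [Finset.prod_range_succ, ih]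
    by_cases hab : b ≤ a
    · have hnat := Nat.choose_succ_right_eq a b
      have key : ((a.choose (b+1)) : ℚ) * ((b:ℚ)+1) = ((a.choose b) : ℚ) * ((a:ℚ) - (b:ℚ)) := by
        have h2 : ((a.choose (b+1) * (b+1) : ℕ) : ℚ) = ((a.choose b * (a-b) : ℕ) : ℚ) := by
          exact_mod_cast hnat
        rw [Nat.cast_mul, Nat.cast_mul, Nat.cast_sub hab] at h2
        push_cast at h2 ⊢
        linarith [h2]
      rw [Nat.factorial_succ]
      push_cast
      linear_combination (-(b.factorial : ℚ)) * key
    · push_neg at hab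
      rw [Nat.choose_eq_zero_of_lt hab, Nat.choose_eq_zero_of_lt (by omega)]
      simp

lemma coeff_one_pfall (j : ℕ) :
    (∏ l ∈ range (j+1), (X - C (l:ℚ))).coeff 1 = (-1)^j * (j.factorial : ℚ) := by
  rw [Finset.prod_range_succ' (fun l => X - C (l:ℚ))]
  simp only [Nat.cast_zero, map_zero, sub_zero]
  rw [Polynomial.coeff_mul_X, Polynomial.coeff_zero_eq_eval_zero, Polynomial.eval_prod]
  have h1 : ∀ l ∈ range j, (X - C (((l+1:ℕ)):ℚ)).eval 0 = (-1) * (((l+1:ℕ)):ℚ) := by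
    intro l _
    rw [Polynomial.eval_sub, Polynomial.eval_X, Polynomial.eval_C]
    ring
  rw [Finset.prod_congr rfl h1, Finset.prod_mul_distrib, Finset.prod_const, Finset.card_range,
    ← Nat.cast_prod]
  congr 1
  exact congrArg _ (Finset.prod_range_add_one_eq_factorial j)

noncomputable def PLpoly (d : ℕ) : Polynomial ℚ :=
  ∑ i ∈ range (d+1), C ((-1)^i * del i d / ((i+1).factorial : ℚ)) * ∏ l ∈ range (i+1), (X - C (l:ℚ))

noncomputable def PRpoly (d : ℕ) : Polynomial ℚ :=
  ∑ i ∈ range (d+1), C (_root_.bernoulli i * ((d+1).choose i : ℚ) / ((d:ℚ)+1)) * X^(d+1-i)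

lemma bernoulli_eq_sum_del (d : ℕ) :
    (_root_.bernoulli d : ℚ) = ∑ i ∈ range (d+1), del i d / ((i:ℚ)+1) := by
  have heval : ∀ N : ℕ, (PLpoly d).eval (N:ℚ) = (PRpoly d).eval (N:ℚ) := by
    intro N
    have hL : (PLpoly d).eval (N:ℚ) = ∑ u ∈ range N, (u:ℚ)^d := by
      unfold PLpoly
      rw [Polynomial.eval_finset_sum]
      rw [sum_newton d N]
      apply Finset.sum_congr rfl
      intro i _
      rw [Polynomial.eval_mul, Polynomial.eval_C, Polynomial.eval_prod]
      have : ∀ l ∈ range (i+1), (X - C (l:ℚ)).eval (N:ℚ) = (N:ℚ) - l := by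
        intro l _; simp
      rw [Finset.prod_congr rfl this, prod_cast_choose N (i+1)]
      have hne : (((i+1).factorial : ℚ)) ≠ 0 := by positivity
      field_simp
    have hR : (PRpoly d).eval (N:ℚ) = ∑ u ∈ range N, (u:ℚ)^d := by
      unfold PRpoly
      rw [Polynomial.eval_finset_sum, _root_.sum_range_pow N d]
      apply Finset.sum_congr rfl
      intro i _
      rw [Polynomial.eval_mul, Polynomial.eval_C, Polynomial.eval_pow, Polynomial.eval_X]
      push_cast
      ring
    rw [hL, hR]
  have hpq : PLpoly d = PRpoly d := by
    apply Polynomial.eq_of_infinite_eval_eq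
    apply Set.infinite_of_injective_forall_mem (f := fun N : ℕ => (N:ℚ))
      (hi := fun a b h => Nat.cast_injective h)
    intro N
    exact heval N
  have hcoeffL : (PLpoly d).coeff 1 = ∑ i ∈ range (d+1), del i d / ((i:ℚ)+1) := by
    unfold PLpoly
    rw [Polynomial.finset_sum_coeff]
    apply Finset.sum_congr rfl
    intro i _
    rw [Polynomial.coeff_C_mul, coeff_one_pfall]
    have hsq : ((-1:ℚ)^i) * ((-1:ℚ)^i) = 1 := by
      rw [← pow_add, Even.neg_one_pow ⟨i, rfl⟩]
    have hfne : ((i.factorial : ℚ)) ≠ 0 := by positivity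
    rw [Nat.factorial_succ]
    push_cast
    have expand : (-1:ℚ)^i * del i d / (((i:ℚ)+1) * (i.factorial:ℚ)) * ((-1:ℚ)^i * (i.factorial:ℚ))
        = (((-1:ℚ)^i) * ((-1:ℚ)^i)) * ((del i d * (i.factorial:ℚ)) / (((i:ℚ)+1) * (i.factorial:ℚ))) := by
      ring
    rw [expand, hsq, one_mul, mul_div_mul_right _ _ hfne]
  have hcoeffR : (PRpoly d).coeff 1 = _root_.bernoulli d := by
    unfold PRpoly
    rw [Polynomial.finset_sum_coeff]
    rw [Finset.sum_eq_single d]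
    · rw [Polynomial.coeff_C_mul]
      have h1 : d + 1 - d = 1 := by omega
      rw [h1, pow_one, Polynomial.coeff_X_one, Nat.choose_succ_self_right]
      have : ((d:ℚ)+1) ≠ 0 := by positivity
      field_simp
      rw [Nat.cast_add, Nat.cast_one]
    · intro i hi hne
      simp only [Finset.mem_range] at hi
      have hcond : ¬ (1 = d + 1 - i) ∧ ¬ (d + 1 - i = 1) := by omega
      simp [Polynomial.coeff_C_mul, Polynomial.coeff_X_pow, hcond.1, hcond.2]
    · intro h
      exact absurd (Finset.self_mem_range_succ d) h
  rw [← hcoeffL, ← hcoeffR, hpq]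

/-! ### Stirling lemmas -/

lemma stirling1_of_lt : ∀ {n m : ℕ}, n < m → stirling1 n m = 0 := by
  intro n
  induction n with
  | zero => intro m hm; match m, hm with | m+1, _ => rfl
  | succ n ih =>
    intro m hm
    match m, hm with
    | m+1, hm =>
      show n * stirling1 n (m+1) + stirling1 n m = 0
      rw [ih (by omega), ih (by omega)]
      simp

lemma stirling1_zero_succ (n : ℕ) : stirling1 (n+1) 0 = 0 := rfl

/-! ### The polynomial `R_n` and its Stirling expansion -/

noncomputable def Rpol (n : ℕ) : Polynomial ℤ := ∏ l ∈ range n, (X + C (l:ℤ))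

lemma Rpol_eq_sum (n : ℕ) : Rpol n = ∑ m ∈ range (n+1), C (stirling1 n m : ℤ) * X^m := by
  induction n with
  | zero =>
    show (1 : Polynomial ℤ) = _
    rw [Finset.sum_range_one]
    show (1 : Polynomial ℤ) = C (stirling1 0 0 : ℤ) * X^0
    simp [stirling1]
  | succ n ih =>
    rw [Rpol, Finset.prod_range_succ, ← Rpol, ih]
    have expand : (∑ m ∈ range (n+1), C (stirling1 n m : ℤ) * X^m) * (X + C (n:ℤ))
        = (∑ m ∈ range (n+1), C (stirling1 n m : ℤ) * X^(m+1))
          + (∑ m ∈ range (n+1), C ((n:ℤ) * (stirling1 n m : ℤ)) * X^m) := by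
      rw [Finset.sum_mul, ← Finset.sum_add_distrib]
      apply Finset.sum_congr rfl
      intro m _
      rw [mul_add]
      congr 1
      · rw [pow_succ]; ring
      · rw [map_mul]; ring
    rw [expand]
    -- RHS target
    rw [Finset.sum_range_succ' (fun m => C (stirling1 (n+1) m : ℤ) * X^m)]
    have h0 : C (stirling1 (n+1) 0 : ℤ) * X^0 = 0 := by
      rw [stirling1_zero_succ]; simp
    rw [h0, add_zero]
    have hrec : ∀ m, C (stirling1 (n+1) (m+1) : ℤ) * X^(m+1)
        = C ((n:ℤ) * (stirling1 n (m+1) : ℤ)) * X^(m+1) + C (stirling1 n m : ℤ) * X^(m+1) := by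
      intro m
      have : stirling1 (n+1) (m+1) = n * stirling1 n (m+1) + stirling1 n m := rfl
      rw [this]
      push_cast
      rw [map_add, add_mul]
    rw [Finset.sum_congr rfl (fun m _ => hrec m), Finset.sum_add_distrib]
    have shift : ∑ m ∈ range (n+1), C ((n:ℤ) * (stirling1 n m : ℤ)) * X^m
        = ∑ m ∈ range (n+1), C ((n:ℤ) * (stirling1 n (m+1) : ℤ)) * X^(m+1) := by
      rw [Finset.sum_range_succ' (fun m => C ((n:ℤ) * (stirling1 n m : ℤ)) * X^m)]
      rw [Finset.sum_range_succ (fun m => C ((n:ℤ) * (stirling1 n (m+1) : ℤ)) * X^(m+1))]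
      have e1 : C ((n:ℤ) * (stirling1 n 0 : ℤ)) * X^0 = 0 := by
        cases n with
        | zero => simp
        | succ n => rw [stirling1_zero_succ]; simp
      have e2 : C ((n:ℤ) * (stirling1 n (n+1) : ℤ)) * X^(n+1) = 0 := by
        rw [stirling1_of_lt (by omega)]; simp
      rw [e1, e2]
    rw [shift]
    ring

lemma Rpol_coeff (n q : ℕ) : (Rpol n).coeff q = (stirling1 n q : ℤ) := by
  rw [Rpol_eq_sum, Polynomial.finset_sum_coeff]
  by_cases hq : q < n + 1
  · rw [Finset.sum_eq_single q]
    · simp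
    · intro m _ hne
      rw [Polynomial.coeff_C_mul, Polynomial.coeff_X_pow, if_neg (fun h => hne h.symm)]
      ring
    · intro h; exact absurd (Finset.mem_range.mpr hq) h
  · push_neg at hq
    rw [stirling1_of_lt (by omega), Nat.cast_zero]
    apply Finset.sum_eq_zero
    intro m hm
    simp only [Finset.mem_range] at hm
    rw [Polynomial.coeff_C_mul, Polynomial.coeff_X_pow, if_neg (by omega)]
    ring

/-! ### fixed parameters -/

section Main

variable (ν j : ℕ)

noncomputable def fpol : Polynomial ℤ := ∏ l ∈ range ν, (X + C ((l:ℤ)+1))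

lemma Rpol_succ_eq : Rpol (ν+1) = fpol ν * X := by
  rw [Rpol, Finset.prod_range_succ' (fun l => X + C (l:ℤ)), fpol]
  have h1 : ∀ l ∈ range ν, X + C (((l+1:ℕ)):ℤ) = X + C ((l:ℤ)+1) := by
    intro l _; push_cast; ring
  rw [Finset.prod_congr rfl h1]
  simp

lemma Rpol_comp : (Rpol (ν+1)).comp (X + C 1) = fpol ν * (X + C ((ν:ℤ)+1)) := by
  rw [Rpol]
  have : (∏ l ∈ range (ν+1), (X + C (l:ℤ))).comp (X + C 1)
      = ∏ l ∈ range (ν+1), ((X + C (l:ℤ)).comp (X + C 1)) := by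
    simp only [Polynomial.comp]
    rw [← Polynomial.eval₂_finset_prod]
  rw [this]
  have step : ∀ l ∈ range (ν+1), (X + C (l:ℤ)).comp (X + C 1) = X + C ((l:ℤ)+1) := by
    intro l _
    rw [Polynomial.add_comp, Polynomial.X_comp, Polynomial.C_comp, map_add]
    ring
  rw [Finset.prod_congr rfl step, Finset.prod_range_succ, fpol]

lemma delta_R : (Rpol (ν+1)).comp (X + C 1) - Rpol (ν+1) = C ((ν:ℤ)+1) * fpol ν := by
  rw [Rpol_comp, Rpol_succ_eq]
  ring

/-! ### Hasse derivatives -/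

noncomputable def Fq : Polynomial ℤ := Polynomial.hasseDeriv j (fpol ν)
noncomputable def Qq : Polynomial ℤ := Polynomial.hasseDeriv j (Rpol (ν+1))

lemma hasse_taylor (P : Polynomial ℤ) :
    Polynomial.hasseDeriv j (P.comp (X + C 1)) = (Polynomial.hasseDeriv j P).comp (X + C 1) := by
  have h1 : P.comp (X + C (1:ℤ)) = Polynomial.taylor 1 P := rfl
  have h2 : (Polynomial.hasseDeriv j P).comp (X + C (1:ℤ)) = Polynomial.taylor 1 (Polynomial.hasseDeriv j P) := rfl
  rw [h1, h2]
  ext m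
  rw [Polynomial.taylor_coeff, Polynomial.hasseDeriv_coeff, Polynomial.taylor_coeff]
  have hcomp := LinearMap.congr_fun (Polynomial.hasseDeriv_comp (R := ℤ) m j) P
  simp only [LinearMap.comp_apply, LinearMap.smul_apply] at hcomp
  rw [hcomp]
  have : ((m+j).choose m • Polynomial.hasseDeriv (m+j) P).eval 1
      = ((m+j).choose m : ℤ) * (Polynomial.hasseDeriv (m+j) P).eval 1 := by
    rw [nsmul_eq_mul]
    rw [Polynomial.eval_mul, Polynomial.eval_natCast]
  rw [this]
  have hsymm : (m+j).choose j = (m+j).choose m := by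
    have := Nat.choose_symm_add (a := j) (b := m)
    rwa [Nat.add_comm j m] at this
  rw [hsymm]

lemma delta_Q : (Qq ν j).comp (X + C 1) - Qq ν j = C ((ν:ℤ)+1) * Fq ν j := by
  unfold Qq Fq
  rw [← hasse_taylor]
  rw [← map_sub, delta_R]
  have : C ((ν:ℤ)+1) * fpol ν = ((ν:ℤ)+1) • fpol ν := by
    rw [Polynomial.smul_eq_C_mul]
  rw [this, LinearMap.map_smul, Polynomial.smul_eq_C_mul]

lemma delta_Q_eval (x : ℤ) : (Qq ν j).eval (x+1) - (Qq ν j).eval x = ((ν:ℤ)+1) * (Fq ν j).eval x := by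
  have := congrArg (Polynomial.eval x) (delta_Q ν j)
  rw [Polynomial.eval_sub, Polynomial.eval_comp, Polynomial.eval_mul, Polynomial.eval_C] at this
  simpa using this

lemma telescope : ∀ M : ℕ, ((ν:ℤ)+1) * ∑ u ∈ range M, (Fq ν j).eval (u:ℤ)
    = (Qq ν j).eval (M:ℤ) - (Qq ν j).eval 0 := by
  intro M
  induction M with
  | zero => simp
  | succ M ih =>
    rw [Finset.sum_range_succ, mul_add, ih]
    have : ((M+1 : ℕ) : ℤ) = (M:ℤ) + 1 := by push_cast; ring
    rw [this, ← delta_Q_eval ν j (M:ℤ)]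
    ring

lemma Fq_coeff (h : ℕ) : (Fq ν j).coeff h
    = ((h+j).choose j : ℤ) * (stirling1 (ν+1) (h+j+1) : ℤ) := by
  unfold Fq
  rw [Polynomial.hasseDeriv_coeff]
  congr 1
  have : (fpol ν).coeff (h+j) = (Rpol (ν+1)).coeff (h+j+1) := by
    rw [Rpol_succ_eq, Polynomial.coeff_mul_X]
  rw [this, Rpol_coeff]

lemma Fq_natDegree : (Fq ν j).natDegree < ν + 2 := by
  unfold Fq
  have h1 : (fpol ν).natDegree ≤ ν := by
    unfold fpol
    refine le_trans (Polynomial.natDegree_prod_le _ _) ?_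
    have : ∀ l ∈ range ν, (X + C ((l:ℤ)+1)).natDegree = 1 := by
      intro l _
      exact Polynomial.natDegree_X_add_C _
    rw [Finset.sum_congr rfl this]
    simp
  have h2 := Polynomial.natDegree_hasseDeriv_le (fpol ν) j
  omega

end Main

/-! ### generic sum lemmas -/

lemma sum_range_mul_split {M : Type*} [AddCommMonoid M] (f : ℕ → M) (m q : ℕ) :
    ∑ u ∈ range (m*q), f u = ∑ c ∈ range m, ∑ w ∈ range q, f (c*q + w) := by
  induction m with
  | zero => simp
  | succ m ih =>
    have : (m+1)*q = m*q + q := by ring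
    rw [this, Finset.sum_range_add, ih, Finset.sum_range_succ]

lemma zmod_sum_univ {A : Type*} [AddCommMonoid A] (M : ℕ) [NeZero M] (ψ : ZMod M → A) :
    ∑ z : ZMod M, ψ z = ∑ u ∈ range M, ψ (u : ZMod M) := by
  apply Finset.sum_bij' (i := fun (z : ZMod M) _ => z.val) (j := fun (u : ℕ) _ => (u : ZMod M))
  · intro z _
    exact Finset.mem_range.mpr (ZMod.val_lt z)
  · intro u _
    exact Finset.mem_univ _
  · intro z _
    exact ZMod.natCast_rightInverse z
  · intro u hu
    exact ZMod.val_cast_of_lt (Finset.mem_range.mp hu)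
  · intro z _
    rw [ZMod.natCast_rightInverse z]

lemma zmod_unit_reindex {A : Type*} [AddCommMonoid A] (M : ℕ) [NeZero M] (u : ZMod M)
    (hu : IsUnit u) (ψ : ZMod M → A) : ∑ z : ZMod M, ψ (u * z) = ∑ z : ZMod M, ψ z := by
  obtain ⟨w, rfl⟩ := hu
  apply Finset.sum_nbij' (i := fun z => (w : ZMod M) * z)
    (j := fun z => ((w⁻¹ : (ZMod M)ˣ) : ZMod M) * z)
  · intro z _; exact Finset.mem_univ _
  · intro z _; exact Finset.mem_univ _
  · intro z _
    rw [← mul_assoc, ← Units.val_mul, inv_mul_cancel, Units.val_one, one_mul]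
  · intro z _
    rw [← mul_assoc, ← Units.val_mul, mul_inv_cancel, Units.val_one, one_mul]
  · intro z _
    rfl

/-! ### power sum divisibility -/

lemma psum_dvd (p : ℕ) (hp : 0 < p) :
    ∀ (a : ℕ), ∀ (r h : ℕ), 1 ≤ h → p^a ∣ r →
      ((p:ℤ))^a ∣ (p:ℤ)^h * ∑ u ∈ range r, (u:ℤ)^h := by
  intro a
  induction a with
  | zero => intro r h _ _; simp
  | succ a ih =>
    intro r h hh hdvd
    obtain ⟨m, hm⟩ := hdvd
    have hr : r = (p^a * m) * p := by rw [hm]; ring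
    subst hr
    rw [sum_range_mul_split (fun u => (u:ℤ)^h) (p^a * m) p]
    have inner : ∀ c : ℕ, ∑ w ∈ range p, (((c*p + w : ℕ)):ℤ)^h
        = ∑ t ∈ range (h+1),
            ((p:ℤ)^t * (c:ℤ)^t * (h.choose t) * (∑ w ∈ range p, (w:ℤ)^(h-t))) := by
      intro c
      have e1 : ∀ w ∈ range p, (((c*p + w : ℕ)):ℤ)^h
          = ∑ t ∈ range (h+1), ((c:ℤ)*(p:ℤ))^t * (w:ℤ)^(h-t) * (h.choose t) := by
        intro w _
        push_cast
        rw [add_pow]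
      rw [Finset.sum_congr rfl e1, Finset.sum_comm]
      apply Finset.sum_congr rfl
      intro t _
      have e2 : ∀ w ∈ range p, ((c:ℤ)*(p:ℤ))^t * (w:ℤ)^(h-t) * (h.choose t)
          = ((p:ℤ)^t * (c:ℤ)^t * (h.choose t)) * (w:ℤ)^(h-t) := by
        intro w _
        rw [mul_pow]
        ring
      rw [Finset.sum_congr rfl e2, ← Finset.mul_sum]
    rw [Finset.sum_congr rfl (fun c _ => inner c), Finset.sum_comm]
    have outer : ∀ t ∈ range (h+1),
        ∑ c ∈ range (p^a*m), ((p:ℤ)^t * (c:ℤ)^t * (h.choose t) * (∑ w ∈ range p, (w:ℤ)^(h-t)))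
        = ((p:ℤ)^t * (∑ c ∈ range (p^a*m), (c:ℤ)^t)) * ((h.choose t) * (∑ w ∈ range p, (w:ℤ)^(h-t))) := by
      intro t _
      have e3 : ∀ c ∈ range (p^a*m), (p:ℤ)^t * (c:ℤ)^t * (h.choose t) * (∑ w ∈ range p, (w:ℤ)^(h-t))
          = ((p:ℤ)^t * ((h.choose t) * (∑ w ∈ range p, (w:ℤ)^(h-t)))) * (c:ℤ)^t := by
        intro c _; ring
      rw [Finset.sum_congr rfl e3, ← Finset.mul_sum]
      ring
    rw [Finset.sum_congr rfl outer, Finset.mul_sum]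
    apply Finset.dvd_sum
    intro t _
    rcases Nat.eq_zero_or_pos t with ht0 | ht1
    · subst ht0
      have e4 : ∑ c ∈ range (p^a*m), (c:ℤ)^0 = ((p:ℤ)^a * m) := by
        simp [Finset.sum_const, Finset.card_range]
      rw [e4]
      obtain ⟨h', hh'⟩ : ∃ h', h = h' + 1 := ⟨h - 1, by omega⟩
      subst hh'
      rw [pow_succ, pow_succ]
      exact ⟨(p:ℤ)^h' * ((m:ℤ) * (Nat.choose (h'+1) 0 * (∑ w ∈ range p, (w:ℤ)^(h'+1-0)))),
        by push_cast; ring⟩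
    · obtain ⟨z, hz⟩ := ih (p^a*m) t ht1 (Dvd.intro m rfl)
      obtain ⟨h', hh'⟩ : ∃ h', h = h' + 1 := ⟨h - 1, by omega⟩
      subst hh'
      rw [hz]
      rw [pow_succ, pow_succ]
      exact ⟨(p:ℤ)^h' * (z * ((Nat.choose (h'+1) t) * (∑ w ∈ range p, (w:ℤ)^(h'+1-t)))),
        by push_cast; ring⟩

/-! ### the value functions g, G -/

section Main2
variable (ν j : ℕ)

noncomputable def gfun (u : ℕ) : ℤ := (Fq ν j).eval ((((ν+1) * u : ℕ)) : ℤ)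
noncomputable def Gfun (N : ℕ) : ℤ := ∑ u ∈ range N, gfun ν j u

lemma sum_F_dvd (M : ℕ) (hcop : Nat.Coprime (ν+1) M) :
    (M:ℤ) ∣ ∑ u ∈ range M, (Fq ν j).eval (u:ℤ) := by
  have hd : (M:ℤ) ∣ ((ν:ℤ)+1) * ∑ u ∈ range M, (Fq ν j).eval (u:ℤ) := by
    rw [telescope]
    have := Polynomial.sub_dvd_eval_sub ((M:ℕ):ℤ) 0 (Qq ν j)
    simpa using this
  have hic : IsCoprime ((M:ℕ):ℤ) ((ν:ℤ)+1) := by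
    have : IsCoprime ((M:ℕ):ℤ) (((ν+1:ℕ)):ℤ) := Nat.isCoprime_iff_coprime.mpr hcop.symm
    push_cast at this
    exact this
  exact hic.dvd_of_dvd_mul_left hd

lemma block_dvd (M c : ℕ) [NeZero M] (hcop : Nat.Coprime (ν+1) M) :
    (M:ℤ) ∣ ∑ u ∈ range M, gfun ν j (c*M + u) := by
  rw [← ZMod.intCast_zmod_eq_zero_iff_dvd]
  push_cast
  set φ := (Fq ν j).map (Int.castRingHom (ZMod M)) with hφ
  have hterm : ∀ u ∈ range M, ((gfun ν j (c*M+u) : ℤ) : ZMod M)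
      = φ.eval ((((ν+1:ℕ)) : ZMod M) * (u : ZMod M)) := by
    intro u _
    unfold gfun
    calc ((((Fq ν j).eval (((ν+1) * (c*M+u) : ℕ) : ℤ)) : ℤ) : ZMod M)
        = (Int.castRingHom (ZMod M)) ((Fq ν j).eval (((ν+1) * (c*M+u) : ℕ) : ℤ)) := rfl
      _ = φ.eval (((((ν+1) * (c*M+u) : ℕ) : ℤ)) : ZMod M) :=
          (Polynomial.eval_intCast_map (Int.castRingHom (ZMod M)) (Fq ν j) _).symm
      _ = φ.eval ((((ν+1:ℕ)) : ZMod M) * (u : ZMod M)) := by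
          congr 1
          push_cast [ZMod.natCast_self]
          ring
  rw [Finset.sum_congr rfl hterm]
  have h1 : ∑ u ∈ range M, φ.eval ((((ν+1:ℕ)) : ZMod M) * (u : ZMod M))
      = ∑ z : ZMod M, φ.eval ((((ν+1:ℕ)) : ZMod M) * z) :=
    (zmod_sum_univ M (fun z => φ.eval ((((ν+1:ℕ)) : ZMod M) * z))).symm
  have h2 : ∑ z : ZMod M, φ.eval ((((ν+1:ℕ)) : ZMod M) * z) = ∑ z : ZMod M, φ.eval z :=
    zmod_unit_reindex M _ ((ZMod.isUnit_iff_coprime (ν+1) M).mpr hcop) (fun z => φ.eval z)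
  have h3 : ∑ z : ZMod M, φ.eval z = ∑ u ∈ range M, φ.eval ((u:ℕ) : ZMod M) :=
    zmod_sum_univ M _
  have h4 : ∑ u ∈ range M, φ.eval ((u:ℕ) : ZMod M)
      = ((∑ u ∈ range M, (Fq ν j).eval (u:ℤ) : ℤ) : ZMod M) := by
    push_cast
    apply Finset.sum_congr rfl
    intro u _
    calc φ.eval ((u:ℕ) : ZMod M) = φ.eval (((u : ℤ)) : ZMod M) := by push_cast; ring_nf
      _ = (Int.castRingHom (ZMod M)) ((Fq ν j).eval (u:ℤ)) :=
          Polynomial.eval_intCast_map (Int.castRingHom (ZMod M)) (Fq ν j) _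
      _ = (((Fq ν j).eval (u:ℤ) : ℤ) : ZMod M) := rfl
  rw [h1, h2, h3, h4]
  rw [ZMod.intCast_zmod_eq_zero_iff_dvd]
  exact sum_F_dvd ν j M hcop

lemma G_dvd (p : ℕ) (hp : p.Prime) (a r : ℕ) (hdvd : p^a ∣ r) :
    (p:ℤ)^a ∣ Gfun ν j r := by
  by_cases hpn : p ∣ (ν+1)
  · -- p divides n : use coefficient expansion and power sums
    have hdeg := Fq_natDegree ν j
    have expand : ∀ u : ℕ, gfun ν j u
        = ∑ h ∈ range (ν+2), (Fq ν j).coeff h * (((ν+1:ℕ):ℤ))^h * (u:ℤ)^h := by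
      intro u
      unfold gfun
      rw [Polynomial.eval_eq_sum_range' hdeg]
      apply Finset.sum_congr rfl
      intro h _
      have hx : ((((ν+1) * u : ℕ)):ℤ) = (((ν+1:ℕ)):ℤ) * (u:ℤ) := by push_cast; ring
      rw [hx, mul_pow, ← mul_assoc]
    unfold Gfun
    rw [Finset.sum_congr rfl (fun u _ => expand u), Finset.sum_comm]
    apply Finset.dvd_sum
    intro h _
    have pull : ∑ u ∈ range r, (Fq ν j).coeff h * (((ν+1:ℕ):ℤ))^h * (u:ℤ)^h
        = ((Fq ν j).coeff h) * ((((ν+1:ℕ):ℤ))^h * ∑ u ∈ range r, (u:ℤ)^h) := by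
      rw [Finset.mul_sum, Finset.mul_sum]
      apply Finset.sum_congr rfl
      intro u _
      ring
    rw [pull]
    rcases Nat.eq_zero_or_pos h with h0 | h1
    · subst h0
      have : (((ν+1:ℕ):ℤ))^0 * ∑ u ∈ range r, (u:ℤ)^0 = (r:ℤ) := by
        simp
      rw [this]
      have : (p:ℤ)^a ∣ (r:ℤ) := by
        exact_mod_cast Int.natCast_dvd_natCast.mpr hdvd
      exact this.mul_left _
    · obtain ⟨n₀, hn₀⟩ := hpn
      have hb : (((ν+1:ℕ):ℤ))^h = (n₀:ℤ)^h * (p:ℤ)^h := by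
        rw [hn₀]
        push_cast
        rw [mul_pow]
        ring
      rw [hb, mul_assoc]
      have := psum_dvd p hp.pos a r h h1 hdvd
      exact (this.mul_left _).mul_left _
  · -- p coprime to n : block argument
    obtain ⟨m, hm⟩ := hdvd
    subst hm
    unfold Gfun
    have hcomm : p^a * m = m * p^a := by ring
    rw [hcomm, sum_range_mul_split]
    apply Finset.dvd_sum
    intro c _
    haveI : NeZero (p^a) := ⟨pow_ne_zero a hp.pos.ne'⟩
    have hcop : Nat.Coprime (ν+1) (p^a) :=
      (((Nat.Prime.coprime_iff_not_dvd hp).mpr hpn).symm.pow_right a)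
    have := block_dvd ν j (p^a) c hcop
    have hcast : ((p^a : ℕ) : ℤ) = (p:ℤ)^a := by push_cast; ring
    rwa [hcast] at this

lemma main_dvd (i : ℕ) : (((i+1:ℕ)):ℤ) ∣ altsum i (gfun ν j) := by
  have hrel : altsum i (gfun ν j) = - altsum (i+1) (Gfun ν j) := by
    rw [altsum_succ]
    have : altsum i (fun r => Gfun ν j (r+1)) = altsum i (Gfun ν j) + altsum i (gfun ν j) := by
      rw [← altsum_add]
      apply altsum_congr
      intro r
      unfold Gfun
      rw [Finset.sum_range_succ]
    rw [this]
    ring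
  rw [hrel, dvd_neg]
  rw [Int.natCast_dvd]
  rw [Nat.dvd_iff_prime_pow_dvd_dvd]
  intro p e hp hpe
  rw [← Int.natCast_dvd, Nat.cast_pow]
  unfold altsum
  apply Finset.dvd_sum
  intro r hr
  rcases Nat.eq_zero_or_pos r with hr0 | hr1
  · subst hr0
    have : Gfun ν j 0 = 0 := by unfold Gfun; simp
    rw [this]
    simp
  · have hprime : p.Prime := hp
    set v := r.factorization p with hv
    have hpv : p^v ∣ r := Nat.ordProj_dvd r p
    by_cases hev : e ≤ v
    · have : (p:ℤ)^e ∣ Gfun ν j r :=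
        G_dvd ν j p hprime e r ((pow_dvd_pow p hev).trans hpv)
      exact this.mul_left _
    · push_neg at hev
      -- v < e
      have hr₀ : r = p^v * (r / p^v) := by
        rw [Nat.ordProj_mul_ordCompl_eq_self r p]
      set r₀ := r / p^v with hr₀def
      have hpr₀ : ¬ p ∣ r₀ := Nat.not_dvd_ordCompl hprime hr1.ne'
      have hCdvd : p^(e-v) ∣ (i+1).choose r := by
        have hmul : (i+1) * Nat.choose i (r-1) = (i+1).choose r * r := by
          have h := Nat.add_one_mul_choose_eq i (r-1)
          have hr' : r - 1 + 1 = r := by omega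
          simpa [Nat.succ_eq_add_one, hr'] using h
        have h1 : p^e ∣ (i+1).choose r * r := by
          rw [← hmul]
          exact Dvd.dvd.mul_right hpe _
        have h2 : p^e = p^v * p^(e-v) := by
          rw [← pow_add]
          congr 1
          omega
        have h1' : p^v * p^(e-v) ∣ p^v * ((i+1).choose r * r₀) := by
          have h3 : p^v * ((i+1).choose r * r₀) = (i+1).choose r * (p^v * r₀) := by ring
          rw [h3, ← hr₀, ← h2]
          exact h1
        have h4 : p^(e-v) ∣ (i+1).choose r * r₀ :=
          (Nat.mul_dvd_mul_iff_left (Nat.pow_pos (n := v) hprime.pos)).mp h1'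
        exact (Nat.Coprime.pow_left (e-v) ((Nat.Prime.coprime_iff_not_dvd hprime).mpr hpr₀)).dvd_of_dvd_mul_right h4
      have hGv : (p:ℤ)^v ∣ Gfun ν j r := G_dvd ν j p hprime v r hpv
      obtain ⟨C₀, hC₀⟩ := hCdvd
      obtain ⟨G₀, hG₀⟩ := hGv
      have hpe' : (p:ℤ)^e = (p:ℤ)^(e-v) * (p:ℤ)^v := by
        rw [← pow_add]
        congr 1
        omega
      rw [hpe', hC₀, hG₀]
      exact ⟨(-1)^r * C₀ * G₀, by push_cast; ring⟩

end Main2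


lemma gfun_expand (ν j r : ℕ) : gfun ν j r
    = ∑ h ∈ range (ν+2), ((h+j).choose j : ℤ) * (stirling1 (ν+1) (h+j+1) : ℤ)
        * (((ν+1:ℕ)):ℤ)^h * (r:ℤ)^h := by
  unfold gfun
  rw [Polynomial.eval_eq_sum_range' (Fq_natDegree ν j)]
  apply Finset.sum_congr rfl
  intro h _
  rw [Fq_coeff]
  have hx : ((((ν+1) * r : ℕ)):ℤ) = (((ν+1:ℕ)):ℤ) * (r:ℤ) := by push_cast; ring
  rw [hx, mul_pow]
  ring

/-! ### easy cases -/

lemma intChoose_zero (a : ℤ) : intChoose a 0 = 1 := by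
  unfold intChoose
  simp

lemma intChoose_nat (a : ℕ) (b : ℕ) : intChoose (a : ℤ) b = (a.choose b : ℚ) := by
  unfold intChoose
  have : ∀ i ∈ range b, (((a:ℤ)):ℚ) - i = (a:ℚ) - i := by
    intro i _
    push_cast
    ring
  rw [Finset.prod_congr rfl this, prod_cast_choose]
  have : (b.factorial : ℚ) ≠ 0 := by positivity
  field_simp

lemma bsA_zero_right (n : ℕ) : bsA n 0 = (stirling1 n 0 : ℚ) := by
  unfold bsA
  simp only [Nat.cast_zero]
  rw [Finset.sum_range_succ' (fun h => _root_.bernoulli h * intChoose ((0:ℤ) + h - 1) h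
      * (stirling1 n (h + 0) : ℚ) * (n : ℚ) ^ h)]
  have hzero : ∀ h ∈ range n, _root_.bernoulli (h+1) * intChoose ((0:ℤ) + ((h+1:ℕ):ℤ) - 1) (h+1)
      * (stirling1 n ((h+1) + 0) : ℚ) * (n : ℚ) ^ (h+1) = 0 := by
    intro h _
    have : intChoose ((0:ℤ) + ((h+1:ℕ):ℤ) - 1) (h+1) = 0 := by
      unfold intChoose
      rw [Finset.prod_eq_zero (Finset.self_mem_range_succ h)]
      · simp
      · push_cast
        ring
    rw [this]
    ring
  rw [Finset.sum_congr rfl hzero]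
  simp [intChoose_zero]

lemma bsA_zero_left (k : ℕ) : bsA 0 k = (stirling1 0 k : ℚ) := by
  unfold bsA
  rw [Finset.sum_range_one]
  rw [intChoose_zero]
  norm_num

/-! ### main identity -/

lemma bsA_main (ν j : ℕ) : bsA (ν+1) (j+1)
    = ∑ i ∈ range (ν+2), ((altsum i (gfun ν j) : ℤ) : ℚ) / ((i:ℚ)+1) := by
  -- abbreviation for the integer coefficients
  set Aq : ℕ → ℚ := fun h => ((h+j).choose j : ℚ) * (stirling1 (ν+1) (h+j+1) : ℚ)
      * (((ν+1:ℕ)):ℚ)^h with hAq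
  have hA : bsA (ν+1) (j+1) = ∑ h ∈ range (ν+2), _root_.bernoulli h * Aq h := by
    unfold bsA
    apply Finset.sum_congr rfl
    intro h _
    have e1 : ((j+1 : ℕ) : ℤ) + (h:ℤ) - 1 = ((h+j : ℕ) : ℤ) := by push_cast; ring
    have e2 : h + (j+1) = h+j+1 := by omega
    rw [e1, e2, intChoose_nat]
    have e3 : (h+j).choose h = (h+j).choose j := Nat.choose_symm_add (a := h) (b := j)
    rw [e3, hAq]
    push_cast
    ring
  -- expand bernoulli via del, with extended range
  have hKF : ∀ h ∈ range (ν+2), (_root_.bernoulli h : ℚ)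
      = ∑ i ∈ range (ν+2), del i h / ((i:ℚ)+1) := by
    intro h hh
    simp only [Finset.mem_range] at hh
    rw [bernoulli_eq_sum_del h]
    rw [← Finset.sum_range_add_sum_Ico _ (by omega : h+1 ≤ ν+2)]
    have : ∀ i ∈ Finset.Ico (h+1) (ν+2), del i h / ((i:ℚ)+1) = 0 := by
      intro i hi
      simp only [Finset.mem_Ico] at hi
      rw [del_eq_zero (by omega)]
      simp
    rw [Finset.sum_congr rfl this]
    simp
  rw [hA, Finset.sum_congr rfl (fun h hh => by rw [hKF h hh])]
  -- swap the h and i sums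
  have hswap : ∑ h ∈ range (ν+2), (∑ i ∈ range (ν+2), del i h / ((i:ℚ)+1)) * Aq h
      = ∑ i ∈ range (ν+2), ∑ h ∈ range (ν+2), (del i h * Aq h) / ((i:ℚ)+1) := by
    have e5 : ∀ h ∈ range (ν+2), (∑ i ∈ range (ν+2), del i h / ((i:ℚ)+1)) * Aq h
        = ∑ i ∈ range (ν+2), (del i h * Aq h) / ((i:ℚ)+1) := by
      intro h _
      rw [Finset.sum_mul]
      apply Finset.sum_congr rfl
      intro i _
      ring
    rw [Finset.sum_congr rfl e5, Finset.sum_comm]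
  rw [hswap]
  -- inner sum equals the integer altsum
  apply Finset.sum_congr rfl
  intro i _
  have hinner : ∑ h ∈ range (ν+2), (del i h * Aq h)
      = ((altsum i (gfun ν j) : ℤ) : ℚ) := by
    have e6 : ∀ h ∈ range (ν+2), del i h * Aq h
        = ∑ r ∈ range (i+1), (-1:ℚ)^r * (i.choose r : ℚ) * ((r:ℚ)^h * Aq h) := by
      intro h _
      rw [del, altsum, Finset.sum_mul]
      apply Finset.sum_congr rfl
      intro r _
      ring
    rw [Finset.sum_congr rfl e6, Finset.sum_comm]
    have e7 : ∀ r ∈ range (i+1), ∑ h ∈ range (ν+2), (-1:ℚ)^r * (i.choose r : ℚ) * ((r:ℚ)^h * Aq h)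
        = (-1:ℚ)^r * (i.choose r : ℚ) * ((gfun ν j r : ℤ) : ℚ) := by
      intro r _
      rw [← Finset.mul_sum]
      congr 1
      rw [gfun_expand]
      push_cast
      apply Finset.sum_congr rfl
      intro h _
      rw [hAq]
      push_cast
      ring
    rw [Finset.sum_congr rfl e7]
    rw [altsum]
    push_cast
    ring
  rw [← Finset.sum_div, hinner]

/-! ### final theorem -/

theorem bsA_isInt (n k : ℕ) : ∃ z : ℤ, bsA n k = (z : ℚ) := by
  match n, k with
  | n, 0 =>
    exact ⟨(stirling1 n 0 : ℤ), by rw [bsA_zero_right]; push_cast; ring⟩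
  | 0, k+1 =>
    exact ⟨(stirling1 0 (k+1) : ℤ), by rw [bsA_zero_left]; push_cast; ring⟩
  | ν+1, j+1 =>
    refine ⟨∑ i ∈ range (ν+2), altsum i (gfun ν j) / ((i:ℤ)+1), ?_⟩
    rw [bsA_main]
    rw [Int.cast_sum]
    apply Finset.sum_congr rfl
    intro i _
    have hdvd : ((i:ℤ)+1) ∣ altsum i (gfun ν j) := by
      have := main_dvd ν j i
      push_cast at this
      exact this
    rw [Int.cast_div_charZero hdvd]
    push_cast
    ring
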